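/- Let A be a real n×n matrix such that ‖Ax‖_∞ = ‖x‖_∞ for all x ∈ ℝ^n, where ‖x‖_∞ = max_j |x_j| is the sup-norm. Then A is a signed permutation matrix. -/
import Mathlib


/-- `A` is a signed permutation matrix: there are a permutation `σ` and signs
`ε_j ∈ {−1,+1}` with `A j k = ε j` if `k = σ j` and `A j k = 0` otherwise. -/
def IsSignedPermMatrix {n : ℕ} (A : Matrix (Fin n) (Fin n) ℝ) : Prop :=
  ∃ σ : Equiv.Perm (Fin n), ∃ ε : Fin n → ℝ,
    (∀ j, ε j = 1 ∨ ε j = -1) ∧ ∀ j k, A j k = if k = σ j then ε j else 0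

/-- If `A` preserves the sup-norm `‖x‖_∞ = max_j |x_j|` of every real vector
(here `‖·‖` is the sup norm on `Fin n → ℝ`), then `A` is a signed permutation
matrix. -/
theorem sup_norm_preserving_is_signed_perm {n : ℕ} (A : Matrix (Fin n) (Fin n) ℝ)
    (hA : ∀ x : Fin n → ℝ, ‖A.mulVec x‖ = ‖x‖) :
    IsSignedPermMatrix A := by
  rcases Nat.eq_zero_or_pos n with rfl | hn
  · exact ⟨1, fun j => 1, fun j => Or.inl rfl, fun j => j.elim0⟩
  have inst : Nonempty (Fin n) := ⟨⟨0, hn⟩⟩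
  -- Step 1: each row has ℓ¹ norm ≤ 1
  have hrow : ∀ j, ∑ k, |A j k| ≤ 1 := by
    intro j
    set x : Fin n → ℝ := fun k => if 0 ≤ A j k then 1 else -1 with hx
    have hxk : ∀ k, ‖x k‖ = 1 := by
      intro k; simp only [hx]; split <;> simp
    have hxnorm : ‖x‖ = 1 := by
      apply le_antisymm
      · exact (pi_norm_le_iff_of_nonneg zero_le_one).2 fun k => (hxk k).le
      · calc (1:ℝ) = ‖x (Classical.arbitrary (Fin n))‖ := (hxk _).symm
          _ ≤ ‖x‖ := norm_le_pi_norm x _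
    have h1 : (A.mulVec x) j = ∑ k, |A j k| := by
      simp only [Matrix.mulVec, dotProduct, hx]
      refine Finset.sum_congr rfl fun k _ => ?_
      by_cases h : 0 ≤ A j k
      · simp [h, abs_of_nonneg h]
      · simp [h, abs_of_neg (lt_of_not_ge h)]
    calc ∑ k, |A j k| = (A.mulVec x) j := h1.symm
      _ ≤ |(A.mulVec x) j| := le_abs_self _
      _ ≤ ‖A.mulVec x‖ := by
          simpa [Real.norm_eq_abs] using norm_le_pi_norm (A.mulVec x) j
      _ = ‖x‖ := hA x
      _ = 1 := hxnorm
  -- Step 2: each column contains an entry of absolute value 1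
  have hcoln : ∀ k, ‖fun i => A i k‖ = 1 := by
    intro k
    have hmv : A.mulVec (Pi.single k 1) = fun i => A i k := by
      funext i
      simp [Matrix.mulVec, dotProduct, Pi.single_apply, Finset.sum_ite_eq']
    have hsn : ‖(Pi.single k 1 : Fin n → ℝ)‖ = 1 := by
      apply le_antisymm
      · refine (pi_norm_le_iff_of_nonneg zero_le_one).2 fun i => ?_
        by_cases h : i = k <;> simp [Pi.single_apply, h]
      · calc (1:ℝ) = ‖(Pi.single k 1 : Fin n → ℝ) k‖ := by simp
          _ ≤ _ := norm_le_pi_norm _ _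
    rw [← hmv, hA, hsn]
  have hcol : ∀ k, ∃ j, |A j k| = 1 := by
    intro k
    obtain ⟨j, hj⟩ := Finite.exists_max fun i => |A i k|
    refine ⟨j, le_antisymm ?_ ?_⟩
    · calc |A j k| = ‖A j k‖ := rfl
        _ ≤ ‖fun i => A i k‖ := norm_le_pi_norm (fun i => A i k) j
        _ = 1 := hcoln k
    · calc (1:ℝ) = ‖fun i => A i k‖ := (hcoln k).symm
        _ ≤ |A j k| := (pi_norm_le_iff_of_nonneg (abs_nonneg _)).2 fun i => hj i
  -- Step 3: if |A j k| = 1 then all other entries of row j vanish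
  have hzero : ∀ j k, |A j k| = 1 → ∀ k', k' ≠ k → A j k' = 0 := by
    intro j k hjk k' hk'
    have hsum := hrow j
    have hsplit : |A j k| + ∑ l ∈ Finset.univ.erase k, |A j l| = ∑ l, |A j l| :=
      Finset.add_sum_erase Finset.univ (fun l => |A j l|) (Finset.mem_univ k)
    have h0 : ∑ l ∈ Finset.univ.erase k, |A j l| ≤ 0 := by
      rw [← hsplit, hjk] at hsum; linarith
    have h0' : ∑ l ∈ Finset.univ.erase k, |A j l| = 0 :=
      le_antisymm h0 (Finset.sum_nonneg fun l _ => abs_nonneg _)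
    have := (Finset.sum_eq_zero_iff_of_nonneg (fun l _ => abs_nonneg (A j l))).1 h0'
      k' (Finset.mem_erase.2 ⟨hk', Finset.mem_univ _⟩)
    exact abs_eq_zero.1 this
  -- Step 4: build the permutation
  choose f hf using hcol
  have hinj : Function.Injective f := by
    intro k k' h
    by_contra hne
    have := hzero (f k) k (hf k) k' (Ne.symm hne)
    rw [h] at this
    have h2 := hf k'
    rw [this] at h2
    simp at h2
  let e : Equiv.Perm (Fin n) := Equiv.ofBijective f (Finite.injective_iff_bijective.1 hinj)
  refine ⟨e.symm, fun j => A j (e.symm j), fun j => ?_, fun j k => ?_⟩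
  · have hfe : f (e.symm j) = j := e.apply_symm_apply j
    have h1 : |A j (e.symm j)| = 1 := by
      have := hf (e.symm j); rwa [hfe] at this
    rcases abs_eq (by norm_num : (0:ℝ) ≤ 1) |>.1 h1 with h | h
    · exact Or.inl h
    · exact Or.inr h
  · have hfe : f (e.symm j) = j := e.apply_symm_apply j
    have h1 : |A j (e.symm j)| = 1 := by
      have := hf (e.symm j); rwa [hfe] at this
    split
    · next h => rw [h]
    · next h => exact hzero j (e.symm j) h1 k h
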